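/- For every x in the open interval (0, 1/2), the values h_e(x) ≤ x and h_o(x) ≤ x hold, where h_e and h_o are the digit-transfer maps from binary expansions of [0,1/2] into the Cantor set defined in the context. -/

import Mathlib

/-- The `i`-th binary digit (`i ≥ 1`) of `x ∈ [0, 1/2]`, using the terminating
binary expansion when `x ≤ 1/4` and the non-terminating one when `x > 1/4`. -/
noncomputable def binDigit (x : ℝ) (i : ℕ) : ℤ :=
  if x ≤ 1 / 4 then ⌊x * 2 ^ i⌋ - 2 * ⌊x * 2 ^ (i - 1)⌋
  else ⌈x * 2 ^ i⌉ - 2 * ⌈x * 2 ^ (i - 1)⌉ + 1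

open Classical in
/-- The ternary digits `γ_i` used in the even digit-transfer map `h_e`. -/
noncomputable def gammaE (x : ℝ) (i : ℕ) : ℝ :=
  if x ≤ 1 / 4 then
    (if ∃ j : ℕ, 2 ≤ j ∧ i = 2 * j ∧ binDigit x j = 1 then 2 else 0)
  else
    (if ∃ j : ℕ, 2 ≤ j ∧ i = 2 * j ∧ binDigit x j = 0 then 0 else 2)

open Classical in
/-- The ternary digits `γ_i` used in the odd digit-transfer map `h_o`. -/
noncomputable def gammaO (x : ℝ) (i : ℕ) : ℝ :=
  if x ≤ 1 / 4 then
    (if ∃ j : ℕ, 2 ≤ j ∧ i = 2 * j + 1 ∧ binDigit x j = 1 then 2 else 0)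
  else
    (if ∃ j : ℕ, 2 ≤ j ∧ i = 2 * j + 1 ∧ binDigit x j = 0 then 0 else 2)

/-- The even digit-transfer map `h_e(x) = ∑_{i≥1} γ_i 3^{-i-2}` into the Cantor set. -/
noncomputable def hE (x : ℝ) : ℝ := ∑' i : ℕ, gammaE x (i + 1) / 3 ^ (i + 3)

/-- The odd digit-transfer map `h_o(x) = ∑_{i≥1} γ_i 3^{-i-2}` into the Cantor set. -/
noncomputable def hO (x : ℝ) : ℝ := ∑' i : ℕ, gammaO x (i + 1) / 3 ^ (i + 3)

open Filter Topology

lemma floor_two_mul_cases (y : ℝ) : ⌊2*y⌋ - 2*⌊y⌋ = 0 ∨ ⌊2*y⌋ - 2*⌊y⌋ = 1 := by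
  have h1 : 2*⌊y⌋ ≤ ⌊2*y⌋ := by
    apply Int.le_floor.2; push_cast; linarith [Int.floor_le y]
  have h2 : ⌊2*y⌋ < 2*⌊y⌋ + 2 := by
    apply Int.floor_lt.2; push_cast; linarith [Int.lt_floor_add_one y]
  omega

lemma digit01 (x : ℝ) (j : ℕ) :
    ⌊x*2^(j+1)⌋ - 2*⌊x*2^j⌋ = 0 ∨ ⌊x*2^(j+1)⌋ - 2*⌊x*2^j⌋ = 1 := by
  have h : x*2^(j+1) = 2*(x*2^j) := by ring
  rw [h]; exact floor_two_mul_cases _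

lemma partial_sum_binary (x : ℝ) (h0 : 0 ≤ x) (h1 : x < 1) (n : ℕ) :
    ∑ j ∈ Finset.range n, ((⌊x*2^(j+1)⌋ - 2*⌊x*2^j⌋ : ℤ):ℝ)/2^(j+1)
      = (⌊x*2^n⌋ : ℝ)/2^n := by
  have hx0 : ⌊x⌋ = 0 := Int.floor_eq_zero_iff.2 ⟨h0, h1⟩
  induction n with
  | zero => simp [hx0]
  | succ n ih =>
      rw [Finset.sum_range_succ, ih]
      have h2 : (2:ℝ)^(n+1) ≠ 0 := by positivity
      have h3 : (2:ℝ)^n ≠ 0 := by positivity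
      field_simp
      push_cast; ring

lemma hasSum_binary (x : ℝ) (h0 : 0 ≤ x) (h1 : x < 1) :
    HasSum (fun j : ℕ => ((⌊x*2^(j+1)⌋ - 2*⌊x*2^j⌋ : ℤ):ℝ)/2^(j+1)) x := by
  rw [hasSum_iff_tendsto_nat_of_nonneg]
  · have hps : (fun n : ℕ => ∑ j ∈ Finset.range n,
        ((⌊x*2^(j+1)⌋ - 2*⌊x*2^j⌋ : ℤ):ℝ)/2^(j+1)) = fun n => (⌊x*2^n⌋ : ℝ)/2^n := by
      funext n; exact partial_sum_binary x h0 h1 n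
    rw [hps]
    have hlow : Tendsto (fun n : ℕ => x - (1/2)^n) atTop (𝓝 x) := by
      have := tendsto_pow_atTop_nhds_zero_of_lt_one (by norm_num : (0:ℝ) ≤ 1/2) (by norm_num)
      simpa using (tendsto_const_nhds (x := x)).sub this
    apply tendsto_of_tendsto_of_tendsto_of_le_of_le hlow tendsto_const_nhds
    · intro n
      simp only
      have h2 : (0:ℝ) < 2^n := by positivity
      have hlt := Int.lt_floor_add_one (x*2^n)
      calc x - (1/2)^n = (x*2^n - 1)/2^n := by
              rw [div_pow, one_pow]; field_simp
        _ ≤ (⌊x*2^n⌋:ℝ)/2^n := by gcongr; linarith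
    · intro n
      simp only
      have h2 : (0:ℝ) < 2^n := by positivity
      rw [div_le_iff₀ h2]
      exact Int.floor_le _
  · intro j
    rcases digit01 x j with h | h <;> rw [h] <;> positivity

lemma helper_le (x : ℝ) (h0 : 0 ≤ x) (h1 : x ≤ 1/4) (c : ℕ) (hc : 6 ≤ c) :
    ∑' m : ℕ, (if binDigit x (m+2) = 1 then (2:ℝ) else 0) / 3^(2*m+c) ≤ x := by
  have hx1 : x < 1 := by linarith
  set g : ℕ → ℝ := fun j => ((⌊x*2^(j+1)⌋ - 2*⌊x*2^j⌋ : ℤ):ℝ)/2^(j+1) with hg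
  have hgsum : HasSum g x := hasSum_binary x h0 hx1
  have hbin : ∀ m : ℕ, binDigit x (m+2) = ⌊x*2^(m+1+1)⌋ - 2*⌊x*2^(m+1)⌋ := by
    intro m
    unfold binDigit
    rw [if_pos h1]
    norm_num
  have hg0 : ∀ j, 0 ≤ g j := by
    intro j
    rcases digit01 x j with h | h <;> simp only [hg, h] <;> positivity
  have hterm : ∀ m, (if binDigit x (m+2) = 1 then (2:ℝ) else 0) / 3^(2*m+c) ≤ g (m+1) := by
    intro m
    rcases digit01 x (m+1) with h | h
    · rw [hbin m, h, if_neg (by norm_num), zero_div]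
      exact hg0 (m+1)
    · rw [hbin m, h, if_pos rfl]
      have hgv : g (m+1) = 1/2^(m+1+1) := by
        simp only [hg]; rw [h]; norm_num
      rw [hgv, div_le_div_iff₀ (by positivity) (by positivity)]
      have h23 : (2:ℝ)*2^(m+1+1) ≤ 3^(2*m+c) := by
        calc (2:ℝ)*2^(m+1+1) = 2^(m+3) := by ring
          _ ≤ 3^(m+3) := by gcongr <;> norm_num
          _ ≤ 3^(2*m+c) := by
              apply pow_le_pow_right₀ (by norm_num)
              omega
      linarith
  have hsum2 : HasSum (fun m => g (m+1)) (x - g 0) := by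
    have := (hasSum_nat_add_iff' 1).2 hgsum
    simpa using this
  have hnn : ∀ m, 0 ≤ (if binDigit x (m+2) = 1 then (2:ℝ) else 0) / 3^(2*m+c) := by
    intro m; split_ifs <;> positivity
  calc ∑' m : ℕ, (if binDigit x (m+2) = 1 then (2:ℝ) else 0) / 3^(2*m+c)
      ≤ ∑' m, g (m+1) :=
        Summable.tsum_le_tsum hterm (Summable.of_nonneg_of_le hnn hterm hsum2.summable) hsum2.summable
    _ = x - g 0 := hsum2.tsum_eq
    _ ≤ x := by linarith [hg0 0]

lemma tsum_le_ninth (f : ℕ → ℝ) (hf0 : ∀ i, 0 ≤ f i) (hf2 : ∀ i, f i ≤ 2 / 3^(i+3)) :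
    ∑' i, f i ≤ 1/9 := by
  have hgeo : HasSum (fun i : ℕ => (2:ℝ)/27 * (1/3)^i) (1/9) := by
    have h := hasSum_geometric_of_lt_one (by norm_num : (0:ℝ) ≤ 1/3) (by norm_num)
    have h2 := h.mul_left ((2:ℝ)/27)
    have e : (2:ℝ)/27 * (1 - 1/3)⁻¹ = 1/9 := by norm_num
    rw [e] at h2; exact h2
  have hle : ∀ i, f i ≤ 2/27 * (1/3)^i := by
    intro i
    refine (hf2 i).trans_eq ?_
    rw [div_pow, one_pow, pow_add]
    ring
  calc ∑' i, f i ≤ ∑' i, (2:ℝ)/27 * (1/3)^i :=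
        Summable.tsum_le_tsum hle (Summable.of_nonneg_of_le hf0 hle hgeo.summable) hgeo.summable
    _ = 1/9 := hgeo.tsum_eq

lemma gamma_bounds (x : ℝ) (i : ℕ) :
    (0 ≤ gammaE x i ∧ gammaE x i ≤ 2) ∧ (0 ≤ gammaO x i ∧ gammaO x i ≤ 2) := by
  unfold gammaE gammaO
  split_ifs <;> norm_num

theorem hE_hO_le (x : ℝ) (hx : x ∈ Set.Ioo (0 : ℝ) (1 / 2)) : hE x ≤ x ∧ hO x ≤ x := by
  obtain ⟨hx0, hx2⟩ := hx
  constructor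
  · by_cases h1 : x ≤ 1/4
    · -- terminating case for hE
      have hinj : Function.Injective (fun m : ℕ => 2*m+3) := by
        intro a b hab
        have : 2*a+3 = 2*b+3 := hab
        omega
      have hsupp : Function.support (fun i : ℕ => gammaE x (i+1) / 3^(i+3))
          ⊆ Set.range (fun m : ℕ => 2*m+3) := by
        intro i hi
        simp only [Function.mem_support] at hi
        have hne : gammaE x (i+1) ≠ 0 := fun h => hi (by rw [h]; simp)
        unfold gammaE at hne
        rw [if_pos h1] at hne
        by_cases hex : ∃ j : ℕ, 2 ≤ j ∧ i+1 = 2*j ∧ binDigit x j = 1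
        · obtain ⟨j, hj2, hje, _⟩ := hex
          exact ⟨j - 2, by show 2*(j-2)+3 = i; omega⟩
        · rw [if_neg hex] at hne; exact absurd rfl hne
      have heq : hE x = ∑' m : ℕ, gammaE x (2*m+3+1) / 3^(2*m+3+3) :=
        (Function.Injective.tsum_eq hinj hsupp).symm
      rw [heq]
      have hterm : ∀ m : ℕ, gammaE x (2*m+3+1) / 3^(2*m+3+3)
          = (if binDigit x (m+2) = 1 then (2:ℝ) else 0) / 3^(2*m+6) := by
        intro m
        have he : 2*m+3+3 = 2*m+6 := by omega
        rw [he]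
        congr 1
        unfold gammaE
        rw [if_pos h1]
        congr 1
        · simp only [eq_iff_iff]
          constructor
          · rintro ⟨j, hj2, hje, hjd⟩
            have : j = m+2 := by omega
            rwa [this] at hjd
          · intro h
            exact ⟨m+2, by omega, by omega, h⟩
      rw [tsum_congr hterm]
      exact helper_le x hx0.le h1 6 le_rfl
    · push_neg at h1
      have hle9 : hE x ≤ 1/9 := by
        apply tsum_le_ninth
        · intro i
          have := ((gamma_bounds x (i+1)).1).1
          positivity
        · intro i
          have := ((gamma_bounds x (i+1)).1).2
          gcongr
      linarith
  · by_cases h1 : x ≤ 1/4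
    · have hinj : Function.Injective (fun m : ℕ => 2*m+4) := by
        intro a b hab
        have : 2*a+4 = 2*b+4 := hab
        omega
      have hsupp : Function.support (fun i : ℕ => gammaO x (i+1) / 3^(i+3))
          ⊆ Set.range (fun m : ℕ => 2*m+4) := by
        intro i hi
        simp only [Function.mem_support] at hi
        have hne : gammaO x (i+1) ≠ 0 := fun h => hi (by rw [h]; simp)
        unfold gammaO at hne
        rw [if_pos h1] at hne
        by_cases hex : ∃ j : ℕ, 2 ≤ j ∧ i+1 = 2*j+1 ∧ binDigit x j = 1
        · obtain ⟨j, hj2, hje, _⟩ := hex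
          exact ⟨j - 2, by show 2*(j-2)+4 = i; omega⟩
        · rw [if_neg hex] at hne; exact absurd rfl hne
      have heq : hO x = ∑' m : ℕ, gammaO x (2*m+4+1) / 3^(2*m+4+3) :=
        (Function.Injective.tsum_eq hinj hsupp).symm
      rw [heq]
      have hterm : ∀ m : ℕ, gammaO x (2*m+4+1) / 3^(2*m+4+3)
          = (if binDigit x (m+2) = 1 then (2:ℝ) else 0) / 3^(2*m+7) := by
        intro m
        have he : 2*m+4+3 = 2*m+7 := by omega
        rw [he]
        congr 1
        unfold gammaO
        rw [if_pos h1]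
        congr 1
        · simp only [eq_iff_iff]
          constructor
          · rintro ⟨j, hj2, hje, hjd⟩
            have : j = m+2 := by omega
            rwa [this] at hjd
          · intro h
            exact ⟨m+2, by omega, by omega, h⟩
      rw [tsum_congr hterm]
      exact helper_le x hx0.le h1 7 (by omega)
    · push_neg at h1
      have hle9 : hO x ≤ 1/9 := by
        apply tsum_le_ninth
        · intro i
          have := ((gamma_bounds x (i+1)).2).1
          positivity
        · intro i
          have := ((gamma_bounds x (i+1)).2).2
          gcongr
      linarith
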